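/- Let H be a finite tree with m edges on vertex set {0,1,...,m}, with each edge given an arbitrary direction and a nonzero real connection coefficient φ_{ij} (with φ_{ji} = φ_{ij}^{-1}). In R^{m+1} with orthonormal basis (u_i), define for each directed edge (i,j) the vectors α_{ij} = u_i − φ_{ij} u_j and e_{ij} = u_i − φ_{ji} u_j. Then the determinant of the m×m matrix Q_H whose (s,t)-entry is the inner product ⟨α_s, e_t⟩ (s, t ranging over the edges of H) equals m+1, independently of the connection coefficients φ. -/

import Mathlib

open SimpleGraph Walk

namespace DetQTreeAux

set_option linter.unusedSectionVars false

variable {V : Type*} [DecidableEq V] {G : SimpleGraph V}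

/-- Telescoping sum over the darts of a walk. -/
lemma tele {R : Type*} [AddCommGroup R] (f : V → R) {x y : V} (p : G.Walk x y) :
    (p.darts.map fun d => f d.snd - f d.fst).sum = f y - f x := by
  induction p with
  | nil => simp
  | cons h p ih => simp only [Walk.darts_cons, List.map_cons, List.sum_cons, ih]; abel

/-- A choice of path between any two vertices of a connected graph. -/
noncomputable def pathTo (hc : G.Connected) (x y : V) : G.Path x y :=
  ((hc x y).some).toPath

/-- Weight (product of `φ` over darts) of a walk. -/
def wgt (φ : V → V → ℝ) {x y : V} (p : G.Walk x y) : ℝ :=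
  (p.darts.map fun d => φ d.fst d.snd).prod

lemma wgt_concat (φ : V → V → ℝ) {x y z : V} (p : G.Walk x y) (h : G.Adj y z) :
    wgt φ (p.concat h) = wgt φ p * φ y z := by
  simp [wgt, Walk.darts_concat]

lemma isPath_concat {x y z : V} {p : G.Walk x y} (hp : p.IsPath) (h : G.Adj y z)
    (hz : z ∉ p.support) : (p.concat h).IsPath := by
  rw [← Walk.isPath_reverse_iff, Walk.reverse_concat]
  exact hp.reverse.cons (by simpa using hz)

/-- Key lemma: in a tree, the path-weight to `b` equals `φ a b` times the path-weight
to `a`, whenever `a` and `b` are adjacent. -/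
lemma wgt_pathTo_adj (hT : G.IsTree) (φ : V → V → ℝ)
    (hsym : ∀ a b, G.Adj a b → φ b a * φ a b = 1) (r : V) {a b : V} (hab : G.Adj a b) :
    wgt φ (pathTo hT.isConnected r b : G.Walk r b)
      = φ a b * wgt φ (pathTo hT.isConnected r a : G.Walk r a) := by
  set P : G.Path r a := pathTo hT.isConnected r a with hP
  have hpp : (P : G.Walk r a).IsPath := P.2
  by_cases hb : b ∈ (P : G.Walk r a).support
  · -- the path to `b` is an initial segment of the path to `a`
    have hq : pathTo hT.isConnected r b
        = ⟨(P : G.Walk r a).takeUntil b hb, hpp.takeUntil hb⟩ :=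
      hT.IsAcyclic.path_unique _ _
    have ha : a ∉ ((P : G.Walk r a).takeUntil b hb).support := by
      have hnd := hpp.support_nodup
      rw [← Walk.take_spec (P : G.Walk r a) hb, Walk.support_append] at hnd
      have ha2 : a ∈ ((P : G.Walk r a).dropUntil b hb).support.tail := by
        have h1 : a ∈ ((P : G.Walk r a).dropUntil b hb).support :=
          Walk.end_mem_support _
        rw [Walk.support_eq_cons] at h1
        rcases List.mem_cons.1 h1 with h1 | h1
        · exact absurd h1 hab.ne
        · exact h1
      intro ha1
      exact List.disjoint_of_nodup_append hnd ha1 ha2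
    have hpa : P = ⟨((P : G.Walk r a).takeUntil b hb).concat hab.symm,
        isPath_concat (hpp.takeUntil hb) hab.symm ha⟩ :=
      hT.IsAcyclic.path_unique _ _
    have hw : wgt φ (P : G.Walk r a)
        = wgt φ ((P : G.Walk r a).takeUntil b hb) * φ b a := by
      conv_lhs => rw [hpa]
      exact wgt_concat _ _ _
    rw [hq]
    simp only
    rw [hw]
    have h2 := hsym a b hab
    linear_combination (-(wgt φ ((P : G.Walk r a).takeUntil b hb))) * h2
  · -- the path to `b` is the path to `a` extended by the edge
    have hq : pathTo hT.isConnected r b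
        = ⟨(P : G.Walk r a).concat hab, isPath_concat hpp hab hb⟩ :=
      hT.IsAcyclic.path_unique _ _
    rw [hq]
    simp only
    rw [wgt_concat]
    ring




lemma sum_list_swap {β ι : Type*} [Fintype ι] (l : List β) (g : β → ι → ℤ) :
    ∑ t, (l.map fun d => g d t).sum = (l.map fun d => ∑ t, g d t).sum := by
  induction l with
  | nil => simp
  | cons d l ih => simp [Finset.sum_add_distrib, ih]

lemma incidence_det_sq (m : ℕ) (E : Fin m → Fin (m + 1) × Fin (m + 1))
    (hloop : ∀ t, (E t).1 ≠ (E t).2)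
    (hinj : ∀ s t : Fin m, Sym2.mk (E s) = Sym2.mk (E t) → s = t)
    (htree : (SimpleGraph.fromRel fun a b => ∃ t, E t = (a, b) ∨ E t = (b, a)).IsTree) :
    ((Matrix.of fun s k : Fin m =>
      ((if (E s).1 = k.succ then (1:ℤ) else 0) - (if (E s).2 = k.succ then 1 else 0))).det) ^ 2
      = 1 := by
  set G : SimpleGraph (Fin (m+1)) :=
    SimpleGraph.fromRel fun a b => ∃ t, E t = (a, b) ∨ E t = (b, a) with hG
  set N : Matrix (Fin m) (Fin m) ℤ := Matrix.of fun s k : Fin m =>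
      ((if (E s).1 = k.succ then (1:ℤ) else 0) - (if (E s).2 = k.succ then 1 else 0)) with hN
  have hadj : ∀ {a b : Fin (m+1)}, G.Adj a b → ∃ t, E t = (a, b) ∨ E t = (b, a) := by
    intro a b h
    rw [hG, SimpleGraph.fromRel_adj] at h
    rcases h.2 with ⟨t, ht⟩ | ⟨t, ht⟩
    · exact ⟨t, ht⟩
    · exact ⟨t, ht.symm⟩
  have hinj' : ∀ s t : Fin m, s((E s).1, (E s).2) = s((E t).1, (E t).2) → s = t := by
    classical
    have hcard := htree.card_edgeFinset
    have himg : G.edgeFinset = Finset.univ.image (fun t => s((E t).1, (E t).2)) := by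
      ext e
      induction e using Sym2.ind with
      | h a b =>
        simp only [SimpleGraph.mem_edgeFinset, SimpleGraph.mem_edgeSet, Finset.mem_image,
          Finset.mem_univ, true_and]
        constructor
        · intro h
          obtain ⟨t, ht | ht⟩ := hadj h
          · exact ⟨t, by rw [ht]⟩
          · exact ⟨t, by rw [ht]; exact Sym2.eq_swap⟩
        · rintro ⟨t, ht⟩
          rcases Sym2.eq_iff.1 ht with ⟨h1, h2⟩ | ⟨h1, h2⟩
          · rw [hG, SimpleGraph.fromRel_adj]
            refine ⟨by rw [← h1, ← h2]; exact hloop t, Or.inl ⟨t, Or.inl ?_⟩⟩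
            rw [← h1, ← h2]
          · rw [hG, SimpleGraph.fromRel_adj]
            refine ⟨by rw [← h1, ← h2]; exact (hloop t).symm, Or.inl ⟨t, Or.inr ?_⟩⟩
            rw [← h1, ← h2]
    have hc : (Finset.univ.image (fun t => s((E t).1, (E t).2))).card = (Finset.univ : Finset (Fin m)).card := by
      rw [← himg]; simp only [Finset.card_univ, Fintype.card_fin] at hcard ⊢; omega
    rw [Finset.card_image_iff] at hc
    exact fun s t h => hc (Finset.mem_coe.2 (Finset.mem_univ s)) (Finset.mem_coe.2 (Finset.mem_univ t)) h
  -- per-dart computation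
  have hdart : ∀ (d : G.Dart) (v : Fin (m+1)),
      (∑ t, ((if E t = (d.snd, d.fst) then (1:ℤ) else 0)
          - (if E t = (d.fst, d.snd) then 1 else 0))
        * ((if (E t).1 = v then 1 else 0) - (if (E t).2 = v then 1 else 0)))
      = (if d.snd = v then 1 else 0) - (if d.fst = v then 1 else 0) := by
    intro d v
    obtain ⟨t0, ht0⟩ := hadj d.adj
    have hs0 : s((E t0).1, (E t0).2) = s(d.fst, d.snd) := by
      rcases ht0 with h | h <;> rw [h]
      exact Sym2.eq_swap
    rw [Finset.sum_eq_single t0]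
    · rcases ht0 with h | h
      · have hne : ¬ E t0 = (d.snd, d.fst) := by
          rw [h]; intro hc
          exact d.adj.ne (congrArg Prod.fst hc)
        rw [if_neg hne, if_pos h, h]
        ring
      · have hne : ¬ E t0 = (d.fst, d.snd) := by
          rw [h]; intro hc
          exact d.adj.ne (congrArg Prod.fst hc).symm
        rw [if_neg hne, if_pos h, h]
        ring
    · intro t _ htne
      have h1 : ¬ E t = (d.snd, d.fst) := by
        intro h
        exact htne (hinj' t t0 (by rw [h, hs0]; exact Sym2.eq_swap))
      have h2 : ¬ E t = (d.fst, d.snd) := by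
        intro h
        exact htne (hinj' t t0 (by rw [h, hs0]))
      rw [if_neg h1, if_neg h2]
      ring
    · intro h
      exact absurd (Finset.mem_univ t0) h
  set P : Matrix (Fin m) (Fin m) ℤ := Matrix.of fun k t =>
    (((pathTo htree.isConnected 0 k.succ : G.Path _ _) : G.Walk 0 k.succ).darts.map fun d =>
      (if E t = (d.snd, d.fst) then (1:ℤ) else 0)
        - (if E t = (d.fst, d.snd) then 1 else 0)).sum with hP
  have hPN : P * N = 1 := by
    ext k k'
    rw [Matrix.mul_apply]
    have : ∀ t : Fin m, P k t * N t k'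
        = (((pathTo htree.isConnected 0 k.succ : G.Path _ _) : G.Walk 0 k.succ).darts.map
            fun d => ((if E t = (d.snd, d.fst) then (1:ℤ) else 0)
              - (if E t = (d.fst, d.snd) then 1 else 0)) * N t k').sum := by
      intro t
      rw [hP]
      exact (List.sum_map_mul_right _ _ _).symm
    rw [Finset.sum_congr rfl fun t _ => this t, sum_list_swap]
    have : (((pathTo htree.isConnected 0 k.succ : G.Path _ _) : G.Walk 0 k.succ).darts.map
        fun d => ∑ t, ((if E t = (d.snd, d.fst) then (1:ℤ) else 0)
          - (if E t = (d.fst, d.snd) then 1 else 0)) * N t k').sum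
        = (((pathTo htree.isConnected 0 k.succ : G.Path _ _) : G.Walk 0 k.succ).darts.map
        fun d => (if d.snd = k'.succ then (1:ℤ) else 0)
          - (if d.fst = k'.succ then 1 else 0)).sum := by
      congr 1
      refine List.map_congr_left fun d _ => ?_
      exact hdart d k'.succ
    rw [this, tele (fun x => if x = k'.succ then (1:ℤ) else 0)]
    have h0 : ¬ (0 : Fin (m+1)) = k'.succ := (Fin.succ_ne_zero k').symm
    rw [if_neg h0, Matrix.one_apply]
    by_cases h : k = k'
    · subst h; simp
    · rw [if_neg h, if_neg (by simpa [Fin.succ_inj] using h)]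
      ring
  have hu : IsUnit N.det := by
    have hd := congrArg Matrix.det hPN
    rw [Matrix.det_mul, Matrix.det_one] at hd
    exact IsUnit.of_mul_eq_one _ (by rw [mul_comm]; exact hd)
  rcases Int.isUnit_iff.1 hu with h | h <;> rw [h] <;> norm_num
end DetQTreeAux

open Matrix

theorem det_Q_tree (m : ℕ) (E : Fin m → Fin (m + 1) × Fin (m + 1))
    (φ : Fin (m + 1) → Fin (m + 1) → ℝ)
    (hφnz : ∀ i j, φ i j ≠ 0)
    (hφinv : ∀ i j, φ j i = (φ i j)⁻¹)
    (hloop : ∀ t, (E t).1 ≠ (E t).2)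
    (hinj : ∀ s t : Fin m, Sym2.mk (E s) = Sym2.mk (E t) → s = t)
    (htree : (SimpleGraph.fromRel fun a b => ∃ t, E t = (a, b) ∨ E t = (b, a)).IsTree)
    (α e : Fin m → (Fin (m + 1) → ℝ))
    (hα : ∀ t, α t = (Pi.single (E t).1 1 : Fin (m + 1) → ℝ) - φ (E t).1 (E t).2 • (Pi.single (E t).2 1 : Fin (m + 1) → ℝ))
    (he : ∀ t, e t = (Pi.single (E t).1 1 : Fin (m + 1) → ℝ) - φ (E t).2 (E t).1 • (Pi.single (E t).2 1 : Fin (m + 1) → ℝ)) :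
    (Matrix.of fun s t => α s ⬝ᵥ e t).det = (m + 1 : ℝ) := by
  classical
  set G : SimpleGraph (Fin (m+1)) :=
    SimpleGraph.fromRel fun a b => ∃ t, E t = (a, b) ∨ E t = (b, a) with hG
  have hadjE : ∀ t, G.Adj (E t).1 (E t).2 := by
    intro t
    rw [hG, SimpleGraph.fromRel_adj]
    exact ⟨hloop t, Or.inl ⟨t, Or.inl rfl⟩⟩
  set w : Fin (m+1) → ℝ := fun k =>
    DetQTreeAux.wgt φ ((DetQTreeAux.pathTo htree.isConnected 0 k : G.Path _ _) : G.Walk 0 k)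
    with hwdef
  have hwA : ∀ {a b : Fin (m+1)}, G.Adj a b → w b = φ a b * w a := by
    intro a b h
    exact DetQTreeAux.wgt_pathTo_adj htree φ
      (fun a b _ => by rw [hφinv]; exact inv_mul_cancel₀ (hφnz a b)) 0 h
  have hwnz : ∀ k, w k ≠ 0 := by
    intro k
    apply List.prod_ne_zero
    intro hx
    rcases List.mem_map.1 hx with ⟨d, _, hd⟩
    exact hφnz _ _ hd
  set z : Fin (m+1) → ℝ := fun k => (w k)⁻¹ with hzdef
  have hznz : ∀ k, z k ≠ 0 := fun k => inv_ne_zero (hwnz k)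
  have hzw : ∀ k, z k * w k = 1 := fun k => inv_mul_cancel₀ (hwnz k)
  have hwE : ∀ t, w (E t).2 = φ (E t).1 (E t).2 * w (E t).1 := fun t => hwA (hadjE t)
  have hwE' : ∀ t, w (E t).1 = φ (E t).2 (E t).1 * w (E t).2 := fun t => hwA (hadjE t).symm
  have hzE : ∀ t, z (E t).1 = φ (E t).1 (E t).2 * z (E t).2 := by
    intro t
    rw [hzdef]
    simp only
    rw [hwE' t, mul_inv, hφinv (E t).1 (E t).2, inv_inv]
  -- the dot product facts
  have hαz : ∀ s, α s ⬝ᵥ z = 0 := by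
    intro s
    rw [hα s, sub_dotProduct, smul_dotProduct, single_dotProduct,
      single_dotProduct, one_mul, smul_eq_mul, one_mul, hzE s]
    ring
  have hwe : ∀ t, w ⬝ᵥ e t = 0 := by
    intro t
    rw [he t, dotProduct_sub, dotProduct_smul, dotProduct_single,
      dotProduct_single, mul_one, smul_eq_mul, mul_one, hwE t, hφinv (E t).1 (E t).2,
      ← mul_assoc, inv_mul_cancel₀ (hφnz (E t).1 (E t).2), one_mul]
    ring
  have hwz : w ⬝ᵥ z = (m + 1 : ℝ) := by
    have : ∀ k, w k * z k = 1 := fun k => mul_inv_cancel₀ (hwnz k)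
    rw [dotProduct]
    rw [Finset.sum_congr rfl fun k _ => this k]
    simp [Finset.card_univ]
  -- the big matrices
  set A' : Matrix (Fin (m+1)) (Fin (m+1)) ℝ := Matrix.of (Fin.snoc α w) with hA'
  set B' : Matrix (Fin (m+1)) (Fin (m+1)) ℝ := Matrix.of (Fin.snoc e z) with hB'
  set M : Matrix (Fin (m+1)) (Fin (m+1)) ℝ := Matrix.of (Fin.snoc
      (fun t => (Pi.single (E t).1 1 : Fin (m+1) → ℝ) - Pi.single (E t).2 1)
      (fun _ => 1)) with hM
  have hCdot : ∀ i j, (A' * B'ᵀ) i j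
      = (Fin.snoc α w : Fin (m+1) → Fin (m+1) → ℝ) i ⬝ᵥ (Fin.snoc e z : Fin (m+1) → Fin (m+1) → ℝ) j := by
    intro i j
    rw [Matrix.mul_apply]
    rfl
  -- step 1
  have step1 : (A' * B'ᵀ).det = (Matrix.of fun s t => α s ⬝ᵥ e t).det * (m + 1 : ℝ) := by
    have hClast : (A' * B'ᵀ) (Fin.last m) (Fin.last m) = ((m:ℝ) + 1) := by
      rw [hCdot]
      simp only [Fin.snoc_last]
      exact hwz
    have hCcol : ∀ s : Fin m, (A' * B'ᵀ) (Fin.castSucc s) (Fin.last m) = 0 := by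
      intro s
      rw [hCdot]
      simp only [Fin.snoc_last, Fin.snoc_castSucc]
      exact hαz s
    have hsub : (A' * B'ᵀ).submatrix (Fin.last m).succAbove (Fin.last m).succAbove
        = Matrix.of fun s t => α s ⬝ᵥ e t := by
      ext s t
      rw [Matrix.submatrix_apply, Fin.succAbove_last, hCdot]
      simp only [Fin.snoc_castSucc, Matrix.of_apply]
    rw [Matrix.det_succ_column _ (Fin.last m), Finset.sum_eq_single (Fin.last m)]
    · rw [hClast, hsub]
      rw [show ((Fin.last m : ℕ) + (Fin.last m : ℕ)) = m + m from by simp]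
      rw [Even.neg_one_pow ⟨m, rfl⟩, one_mul]
      ring
    · intro i _ hi
      obtain ⟨s, rfl⟩ := Fin.exists_castSucc_eq.2 hi
      rw [hCcol s]
      ring
    · exact fun h => absurd (Finset.mem_univ _) h
  -- step 2
  have step2 : (A' * B'ᵀ).det = A'.det * B'.det := by
    rw [Matrix.det_mul, Matrix.det_transpose]
  -- step 3 : scaling identities
  have sc1 : A' * Matrix.diagonal z
      = Matrix.diagonal (Fin.snoc (fun t => z (E t).1) (1:ℝ)) * M := by
    ext i j
    rw [Matrix.mul_diagonal, Matrix.diagonal_mul]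
    induction i using Fin.lastCases with
    | last =>
      simp only [hA', hM, Matrix.of_apply, Fin.snoc_last]
      rw [mul_inv_cancel₀ (hwnz j), one_mul]
    | cast s =>
      simp only [hA', hM, Matrix.of_apply, Fin.snoc_castSucc]
      rw [hα s]
      simp only [Pi.sub_apply, Pi.smul_apply, Pi.single_apply, smul_eq_mul]
      rcases eq_or_ne j (E s).1 with h1 | h1
      · subst h1
        rw [if_neg (hloop s)]
        ring
      · rcases eq_or_ne j (E s).2 with h2 | h2
        · subst h2
          rw [if_neg h1, if_pos rfl, hzE s]
          ring
        · rw [if_neg h1, if_neg h2]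
          ring
  have sc2 : B' * Matrix.diagonal w
      = Matrix.diagonal (Fin.snoc (fun t => w (E t).1) (1:ℝ)) * M := by
    ext i j
    rw [Matrix.mul_diagonal, Matrix.diagonal_mul]
    induction i using Fin.lastCases with
    | last =>
      simp only [hB', hM, Matrix.of_apply, Fin.snoc_last]
      rw [inv_mul_cancel₀ (hwnz j), one_mul]
    | cast s =>
      simp only [hB', hM, Matrix.of_apply, Fin.snoc_castSucc]
      rw [he s]
      simp only [Pi.sub_apply, Pi.smul_apply, Pi.single_apply, smul_eq_mul]
      rcases eq_or_ne j (E s).1 with h1 | h1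
      · subst h1
        rw [if_neg (hloop s)]
        ring
      · rcases eq_or_ne j (E s).2 with h2 | h2
        · subst h2
          rw [if_neg h1, if_pos rfl, hwE' s]
          ring
        · rw [if_neg h1, if_neg h2]
          ring
  have key : A'.det * B'.det = M.det ^ 2 := by
    have e1 : A'.det * (∏ k, z k) = (∏ t, z (E t).1) * M.det := by
      have h := congrArg Matrix.det sc1
      rwa [Matrix.det_mul, Matrix.det_mul, Matrix.det_diagonal, Matrix.det_diagonal,
        Fin.prod_snoc, mul_one] at h
    have e2 : B'.det * (∏ k, w k) = (∏ t, w (E t).1) * M.det := by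
      have h := congrArg Matrix.det sc2
      rwa [Matrix.det_mul, Matrix.det_mul, Matrix.det_diagonal, Matrix.det_diagonal,
        Fin.prod_snoc, mul_one] at h
    have hzw1 : (∏ k, z k) * (∏ k, w k) = 1 := by
      rw [← Finset.prod_mul_distrib]
      exact Finset.prod_eq_one fun k _ => hzw k
    have hzw2 : (∏ t, z (E t).1) * (∏ t, w (E t).1) = 1 := by
      rw [← Finset.prod_mul_distrib]
      exact Finset.prod_eq_one fun t _ => hzw (E t).1
    have hfin : (A'.det * B'.det) * ((∏ k, z k) * (∏ k, w k))
        = ((∏ t, z (E t).1) * (∏ t, w (E t).1)) * M.det ^ 2 := by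
      linear_combination (B'.det * (∏ k, w k)) * e1 + ((∏ t, z (E t).1) * M.det) * e2
    rw [hzw1, hzw2, mul_one, one_mul] at hfin
    exact hfin
  -- step 4
  have step4 : M.det ^ 2 = ((m : ℝ) + 1) ^ 2 := by
    set U : Matrix (Fin (m+1)) (Fin (m+1)) ℝ :=
      Matrix.of fun i j => if j = 0 then 1 else if i = j then (1:ℝ) else 0 with hUdef
    have hU : U.det = 1 := by
      rw [Matrix.det_of_lowerTriangular U (by
        intro i j hij
        have hij' : i < j := hij
        have hj0 : j ≠ 0 := Fin.pos_iff_ne_zero.1 (lt_of_le_of_lt (Fin.zero_le i) hij')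
        simp only [hUdef, Matrix.of_apply]
        rw [if_neg hj0, if_neg (ne_of_lt hij')])]
      refine Finset.prod_eq_one fun i _ => ?_
      simp only [hUdef, Matrix.of_apply]
      by_cases h : i = (0 : Fin (m+1)) <;> simp [h]
    have hMU : M.det = (M * U).det := by rw [Matrix.det_mul, hU, mul_one]
    have hcol0 : ∀ s : Fin m, (M * U) (Fin.castSucc s) 0 = 0 := by
      intro s
      rw [Matrix.mul_apply]
      simp [hM, hUdef, Fin.snoc_castSucc, Finset.sum_sub_distrib]
    have hlast0 : (M * U) (Fin.last m) 0 = ((m:ℝ) + 1) := by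
      rw [Matrix.mul_apply]
      simp [hM, hUdef, Finset.card_univ]
    have hcolj : ∀ (i : Fin (m+1)) (k : Fin m), (M * U) i k.succ = M i k.succ := by
      intro i k
      rw [Matrix.mul_apply]
      simp [hUdef, Fin.succ_ne_zero, mul_ite]
    set N : Matrix (Fin m) (Fin m) ℤ := Matrix.of fun s k : Fin m =>
      ((if (E s).1 = k.succ then (1:ℤ) else 0) - (if (E s).2 = k.succ then 1 else 0)) with hNdef
    have hsub : (M * U).submatrix (Fin.last m).succAbove Fin.succ
        = (Int.castRingHom ℝ).mapMatrix N := by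
      ext s k
      rw [Matrix.submatrix_apply, Fin.succAbove_last, hcolj]
      simp only [hM, hNdef, Matrix.of_apply, Fin.snoc_castSucc, Matrix.map_apply,
        Pi.sub_apply, Pi.single_apply]
      push_cast
      rw [if_congr (eq_comm (a := k.succ) (b := (E s).1)) rfl rfl,
          if_congr (eq_comm (a := k.succ) (b := (E s).2)) rfl rfl]
      simp only [RingHom.mapMatrix_apply, Matrix.map_apply, Matrix.of_apply]
      rw [map_sub, apply_ite (Int.castRingHom ℝ), apply_ite (Int.castRingHom ℝ)]
      simp
    have hexp : (M * U).det = (-1 : ℝ)^m * ((m:ℝ) + 1) * ((N.det : ℤ) : ℝ) := by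
      rw [Matrix.det_succ_column_zero, Finset.sum_eq_single (Fin.last m)]
      · rw [hlast0, hsub, ← RingHom.map_det]
        simp [Fin.val_last]
      · intro i _ hi
        obtain ⟨s, rfl⟩ := Fin.exists_castSucc_eq.2 hi
        rw [hcol0 s]
        ring
      · exact fun h => absurd (Finset.mem_univ _) h
    have hNsq : (N.det) ^ 2 = 1 := DetQTreeAux.incidence_det_sq m E hloop hinj htree
    have hNc : (((N.det : ℤ) : ℝ)) ^ 2 = 1 := by exact_mod_cast congrArg (fun x : ℤ => (x : ℝ)) hNsq
    have hm1 : ((-1 : ℝ)^m)^2 = 1 := by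
      rw [← pow_mul]
      exact Even.neg_one_pow ⟨m, by ring⟩
    rw [hMU, hexp]
    calc ((-1 : ℝ)^m * ((m:ℝ) + 1) * ((N.det : ℤ) : ℝ))^2
        = (((-1 : ℝ)^m)^2) * (((m:ℝ)+1)^2 * (((N.det : ℤ) : ℝ))^2) := by ring
      _ = ((m : ℝ) + 1)^2 := by rw [hm1, hNc, one_mul, mul_one]
  -- conclusion
  have hfinal : (Matrix.of fun s t => α s ⬝ᵥ e t).det * ((m:ℝ) + 1)
      = ((m:ℝ) + 1) * ((m:ℝ) + 1) := by
    have := step1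
    rw [step2, key, step4] at this
    push_cast at this ⊢
    nlinarith [this]
  have hne : ((m:ℝ) + 1) ≠ 0 := by positivity
  field_simp at hfinal
  push_cast
  nlinarith [hfinal]
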